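/- Let M = c • W with c ∈ ℂ, c ≠ 0 and W ∈ Matrix.unitaryGroup (Fin n) ℂ, and let Q be an m×m×n tensor that is ⋆_M-unitary. Then for every m×k×n tensor B one has ‖Q ⋆_M B‖_F = ‖B‖_F, and for every p×m×n tensor B' one has ‖B' ⋆_M Q‖_F = ‖B'‖_F. -/

import Mathlib

open scoped BigOperators ComplexConjugate Matrix

noncomputable section

variable {R : Type*}

/-- Mode-3 product of a third-order tensor (encoded by its frontal slices)
with a transform matrix: `(A ×₃ M) i = ∑ j, (M i j) • (A j)`. -/
def mode3 [RCLike R] {ι α β : Type*} [Fintype ι]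
    (A : ι → Matrix α β R) (M : Matrix ι ι R) : ι → Matrix α β R :=
  fun i => ∑ j, M i j • A j

/-- Frobenius (entrywise ℓ²) norm of a matrix. -/
def fnorm [RCLike R] {α β : Type*} [Fintype α] [Fintype β] (A : Matrix α β R) : ℝ :=
  Real.sqrt (∑ a, ∑ b, ‖A a b‖ ^ 2)

/-- Frobenius norm of a tensor: `‖A‖² = ∑ i, ‖A i‖²`. -/
def tnorm [RCLike R] {ι α β : Type*} [Fintype ι] [Fintype α] [Fintype β]
    (A : ι → Matrix α β R) : ℝ :=
  Real.sqrt (∑ i, fnorm (A i) ^ 2)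

/-- The ⋆_M product: facewise product in the transform domain, then inverse transform. -/
def tprodM [RCLike R] {ι m p q : Type*} [Fintype ι] [DecidableEq ι] [Fintype p]
    (M : Matrix ι ι R) (A : ι → Matrix m p R) (B : ι → Matrix p q R) :
    ι → Matrix m q R :=
  mode3 (fun i => mode3 A M i * mode3 B M i) M⁻¹

/-- Conjugate transpose of a tensor under ⋆_M. -/
def tconj [RCLike R] {ι m p : Type*} [Fintype ι] [DecidableEq ι]
    (M : Matrix ι ι R) (A : ι → Matrix m p R) : ι → Matrix p m R :=
  mode3 (fun i => (mode3 A M i)ᴴ) M⁻¹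

/-- The identity tensor under ⋆_M. -/
def tId [RCLike R] (m : Type*) [DecidableEq m] {ι : Type*} [Fintype ι] [DecidableEq ι]
    (M : Matrix ι ι R) : ι → Matrix m m R :=
  mode3 (fun _ => (1 : Matrix m m R)) M⁻¹

/-- A square tensor `Q` is ⋆_M-unitary if `Qᴴ ⋆_M Q = Q ⋆_M Qᴴ = I`. -/
def tUnitary [RCLike R] {ι m : Type*} [Fintype ι] [DecidableEq ι] [Fintype m] [DecidableEq m]
    (M : Matrix ι ι R) (Q : ι → Matrix m m R) : Prop :=
  tprodM M (tconj M Q) Q = tId m M ∧ tprodM M Q (tconj M Q) = tId m M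

/-- A t-SVDM of `A`: a factorization `A = U ⋆_M S ⋆_M Vᴴ` with `U`, `V` ⋆_M-unitary and every
transform-domain slice `Ŝ i` diagonal with real, nonnegative, nonincreasing diagonal entries. -/
def IsTSVDM [RCLike R] {m p n : ℕ} (M : Matrix (Fin n) (Fin n) R)
    (A : Fin n → Matrix (Fin m) (Fin p) R)
    (U : Fin n → Matrix (Fin m) (Fin m) R)
    (S : Fin n → Matrix (Fin m) (Fin p) R)
    (V : Fin n → Matrix (Fin p) (Fin p) R) : Prop :=
  A = tprodM M (tprodM M U S) (tconj M V) ∧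
  tUnitary M U ∧ tUnitary M V ∧
  (∀ (i : Fin n) (a : Fin m) (b : Fin p), (a : ℕ) ≠ (b : ℕ) → mode3 S M i a b = 0) ∧
  (∀ (i : Fin n) (a : Fin m) (b : Fin p), (a : ℕ) = (b : ℕ) →
      ∃ r : ℝ, 0 ≤ r ∧ mode3 S M i a b = (r : R)) ∧
  (∀ (i : Fin n) (a a' : Fin m) (b b' : Fin p), (a : ℕ) = (b : ℕ) → (a' : ℕ) = (b' : ℕ) →
      (a : ℕ) ≤ (a' : ℕ) →
      RCLike.re (mode3 S M i a' b') ≤ RCLike.re (mode3 S M i a b))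

/-- Transform-domain slice of a truncation:
(first k columns of Û) * (leading k×k block of Ŝ) * (first k columns of V̂)ᴴ. -/
def truncSlice [RCLike R] {m p : ℕ} (k : ℕ) (Uh : Matrix (Fin m) (Fin m) R)
    (Sh : Matrix (Fin m) (Fin p) R) (Vh : Matrix (Fin p) (Fin p) R) :
    Matrix (Fin m) (Fin p) R :=
  Matrix.of fun a b =>
    ∑ j : Fin m, ∑ l : Fin p,
      if (j : ℕ) < k ∧ (l : ℕ) < k then Uh a j * Sh j l * star (Vh b l) else 0

/-- The multi-rank-ρ truncation of a t-SVDM (use `ρ = fun _ => k` for the t-rank-k truncation). -/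
def truncTensor [RCLike R] {m p n : ℕ} (M : Matrix (Fin n) (Fin n) R)
    (U : Fin n → Matrix (Fin m) (Fin m) R) (S : Fin n → Matrix (Fin m) (Fin p) R)
    (V : Fin n → Matrix (Fin p) (Fin p) R) (ρ : Fin n → ℕ) :
    Fin n → Matrix (Fin m) (Fin p) R :=
  mode3 (fun i => truncSlice (ρ i) (mode3 U M i) (mode3 S M i) (mode3 V M i)) M⁻¹

/-- The permuted tensor `Aᴾ`: `(Aᴾ c) i j = (A i) c j`. -/
def tperm [RCLike R] {m p n : ℕ} (A : Fin n → Matrix (Fin m) (Fin p) R) :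
    Fin m → Matrix (Fin n) (Fin p) R :=
  fun c => Matrix.of fun i j => A i c j


section Aux
open Matrix

private lemma normsq_eq_re_star_mul (z : ℂ) : ‖z‖ ^ 2 = (star z * z).re := by
  have h : star z * z = ((‖z‖ ^ 2 : ℝ) : ℂ) := by
    rw [Complex.star_def, mul_comm, Complex.mul_conj]
    norm_num [Complex.normSq_eq_norm_sq]
  rw [h, Complex.ofReal_re]

private lemma sumsq_mulVec {ι : Type*} [Fintype ι] [DecidableEq ι] (M : Matrix ι ι ℂ) (r : ℝ)
    (h : Mᴴ * M = (r : ℂ) • 1) (v : ι → ℂ) :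
    ∑ i, ‖M.mulVec v i‖ ^ 2 = r * ∑ i, ‖v i‖ ^ 2 := by
  have key : ∀ u : ι → ℂ, ∑ i, ‖u i‖ ^ 2 = (dotProduct (star u) u).re := by
    intro u
    rw [dotProduct, Complex.re_sum]
    exact Finset.sum_congr rfl fun i _ => normsq_eq_re_star_mul (u i)
  rw [key, key]
  have hdp : dotProduct (star (M.mulVec v)) (M.mulVec v)
      = (r : ℂ) * dotProduct (star v) v := by
    rw [Matrix.star_mulVec, Matrix.dotProduct_mulVec, Matrix.vecMul_vecMul, h]
    have h2 : Matrix.vecMul (star v) ((r : ℂ) • (1 : Matrix ι ι ℂ)) = (r : ℂ) • star v := by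
      ext j
      simp [Matrix.vecMul, dotProduct, Matrix.smul_apply, Matrix.one_apply,
        mul_ite, mul_comm]
    rw [h2, smul_dotProduct, smul_eq_mul]
  rw [hdp, Complex.mul_re, Complex.ofReal_re, Complex.ofReal_im]
  ring

private lemma mode3_mode3_cancel {ι α β : Type*} [Fintype ι] [DecidableEq ι]
    (A : ι → Matrix α β ℂ) (M N : Matrix ι ι ℂ) (h : N * M = 1) :
    mode3 (mode3 A M) N = A := by
  funext i
  simp only [mode3, Finset.smul_sum, smul_smul]
  rw [Finset.sum_comm]
  have h1 : ∀ l, (∑ j, (N i j * M j l) • A l) = (1 : Matrix ι ι ℂ) i l • A l := by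
    intro l
    rw [← Finset.sum_smul, ← Matrix.mul_apply, h]
  simp only [h1]
  simp [Matrix.one_apply, ite_smul]

private lemma sumsq_mul_left {α β : Type*} [Fintype α] [Fintype β] [DecidableEq α]
    (U : Matrix α α ℂ) (h : Uᴴ * U = 1) (X : Matrix α β ℂ) :
    ∑ a, ∑ b, ‖(U * X) a b‖ ^ 2 = ∑ a, ∑ b, ‖X a b‖ ^ 2 := by
  have h' : Uᴴ * U = ((1 : ℝ) : ℂ) • 1 := by simpa using h
  rw [Finset.sum_comm]
  have step : ∀ b, ∑ a, ‖(U * X) a b‖ ^ 2 = ∑ a, ‖X a b‖ ^ 2 := by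
    intro b
    have hv : ∀ a, (U * X) a b = U.mulVec (fun j => X j b) a := by
      intro a
      simp [Matrix.mul_apply, Matrix.mulVec, dotProduct]
    simp only [hv]
    rw [sumsq_mulVec U 1 h' (fun j => X j b), one_mul]
  rw [Finset.sum_congr rfl fun b _ => step b, Finset.sum_comm]

private lemma sumsq_mul_right {α β : Type*} [Fintype α] [Fintype β] [DecidableEq α]
    (U : Matrix α α ℂ) (h : U * Uᴴ = 1) (X : Matrix β α ℂ) :
    ∑ a, ∑ b, ‖(X * U) a b‖ ^ 2 = ∑ a, ∑ b, ‖X a b‖ ^ 2 := by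
  have hT : (Uᵀ)ᴴ * Uᵀ = ((1 : ℝ) : ℂ) • 1 := by
    ext i j
    have h1 : ((Uᵀ)ᴴ * Uᵀ) i j = (U * Uᴴ) j i := by
      simp [Matrix.mul_apply, Matrix.conjTranspose_apply, Matrix.transpose_apply, mul_comm]
    rw [h1, h]
    simp [Matrix.one_apply, eq_comm]
  refine Finset.sum_congr rfl fun a _ => ?_
  have hv : ∀ b, (X * U) a b = (Uᵀ).mulVec (X a) b := by
    intro b
    simp [Matrix.mul_apply, Matrix.mulVec, dotProduct, Matrix.transpose_apply, mul_comm]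
  simp only [hv]
  rw [sumsq_mulVec (Uᵀ) 1 hT (X a), one_mul]

private lemma tsumsq_mode3 {ι α β : Type*} [Fintype ι] [DecidableEq ι] [Fintype α] [Fintype β]
    (A : ι → Matrix α β ℂ) (M : Matrix ι ι ℂ) (r : ℝ) (h : Mᴴ * M = (r : ℂ) • 1) :
    ∑ i, ∑ a, ∑ b, ‖mode3 A M i a b‖ ^ 2 = r * ∑ i, ∑ a, ∑ b, ‖A i a b‖ ^ 2 := by
  have hm : ∀ (i : ι) (a : α) (b : β),
      mode3 A M i a b = M.mulVec (fun j => A j a b) i := by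
    intro i a b
    simp [mode3, Matrix.mulVec, dotProduct, Matrix.sum_apply]
  calc ∑ i, ∑ a, ∑ b, ‖mode3 A M i a b‖ ^ 2
      = ∑ a, ∑ b, ∑ i, ‖M.mulVec (fun j => A j a b) i‖ ^ 2 := by
        simp only [hm]
        exact Finset.sum_comm.trans (Finset.sum_congr rfl fun a _ => Finset.sum_comm)
    _ = ∑ a, ∑ b, r * ∑ j, ‖A j a b‖ ^ 2 :=
        Finset.sum_congr rfl fun a _ => Finset.sum_congr rfl fun b _ =>
          sumsq_mulVec M r h _
    _ = r * ∑ a, ∑ b, ∑ j, ‖A j a b‖ ^ 2 := by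
        simp only [← Finset.mul_sum]
    _ = r * ∑ i, ∑ a, ∑ b, ‖A i a b‖ ^ 2 := by
        congr 1
        exact (Finset.sum_congr rfl fun a _ => Finset.sum_comm).trans Finset.sum_comm

private lemma tnorm_eq_sqrt {ι α β : Type*} [Fintype ι] [Fintype α] [Fintype β]
    (A : ι → Matrix α β ℂ) :
    tnorm A = Real.sqrt (∑ i, ∑ a, ∑ b, ‖A i a b‖ ^ 2) := by
  unfold tnorm fnorm
  congr 1
  exact Finset.sum_congr rfl fun i _ => Real.sq_sqrt (by positivity)

end Aux

/-- unitary invariance of the tensor Frobenius norm under ⋆_M products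
with a ⋆_M-unitary tensor, for `M = c • W`, `c ≠ 0`, `W` unitary. -/
theorem stmt1 {n m k p : ℕ}
    (W : Matrix (Fin n) (Fin n) ℂ) (hW : W ∈ Matrix.unitaryGroup (Fin n) ℂ)
    (c : ℂ) (hc : c ≠ 0)
    (Q : Fin n → Matrix (Fin m) (Fin m) ℂ) (hQ : tUnitary (c • W) Q) :
    (∀ B : Fin n → Matrix (Fin m) (Fin k) ℂ,
        tnorm (tprodM (c • W) Q B) = tnorm B) ∧
    (∀ B' : Fin n → Matrix (Fin p) (Fin m) ℂ,
        tnorm (tprodM (c • W) B' Q) = tnorm B') := by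
  classical
  have hW1 : Wᴴ * W = 1 := by
    simpa [Matrix.star_eq_conjTranspose] using hW.1
  have hW2 : W * Wᴴ = 1 := by
    simpa [Matrix.star_eq_conjTranspose] using hW.2
  set M : Matrix (Fin n) (Fin n) ℂ := c • W with hM
  have hMinv : M⁻¹ = c⁻¹ • Wᴴ := by
    apply Matrix.inv_eq_left_inv
    rw [hM, Matrix.smul_mul, Matrix.mul_smul, hW1, smul_smul,
      inv_mul_cancel₀ hc, one_smul]
  have hMN : M * M⁻¹ = 1 := by
    rw [hMinv, hM, Matrix.smul_mul, Matrix.mul_smul, hW2, smul_smul,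
      mul_inv_cancel₀ hc, one_smul]
  have hconj : ∀ z : ℂ, star z * z = ((‖z‖ ^ 2 : ℝ) : ℂ) := by
    intro z
    rw [Complex.star_def, mul_comm, Complex.mul_conj]
    norm_num [Complex.normSq_eq_norm_sq]
  have hMHM : Mᴴ * M = ((‖c‖ ^ 2 : ℝ) : ℂ) • 1 := by
    rw [hM, Matrix.conjTranspose_smul, Matrix.smul_mul, Matrix.mul_smul, hW1,
      smul_smul, hconj]
  have hMiHMi : (M⁻¹)ᴴ * M⁻¹ = (((‖c‖ ^ 2)⁻¹ : ℝ) : ℂ) • 1 := by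
    rw [hMinv, Matrix.conjTranspose_smul, Matrix.smul_mul, Matrix.mul_smul,
      Matrix.conjTranspose_conjTranspose, hW2, smul_smul, hconj]
    norm_num
  have hQconj : mode3 (tconj M Q) M = fun i => (mode3 Q M i)ᴴ := by
    unfold tconj
    exact mode3_mode3_cancel _ _ _ hMN
  have hId : mode3 (tId (Fin m) M) M = fun _ => (1 : Matrix (Fin m) (Fin m) ℂ) := by
    unfold tId
    exact mode3_mode3_cancel _ _ _ hMN
  have hQ1 : ∀ i, (mode3 Q M i)ᴴ * mode3 Q M i = 1 := by
    intro i
    have h : mode3 (tprodM M (tconj M Q) Q) M = mode3 (tId (Fin m) M) M := by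
      rw [hQ.1]
    unfold tprodM at h
    rw [mode3_mode3_cancel _ _ _ hMN, hId] at h
    have h2 := congrFun h i
    rw [congrFun hQconj i] at h2
    exact h2
  have hQ2 : ∀ i, mode3 Q M i * (mode3 Q M i)ᴴ = 1 := by
    intro i
    have h : mode3 (tprodM M Q (tconj M Q)) M = mode3 (tId (Fin m) M) M := by
      rw [hQ.2]
    unfold tprodM at h
    rw [mode3_mode3_cancel _ _ _ hMN, hId] at h
    have h2 := congrFun h i
    rw [congrFun hQconj i] at h2
    exact h2
  have hcsq : (0 : ℝ) < ‖c‖ ^ 2 := pow_pos (norm_pos_iff.mpr hc) 2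
  constructor
  · intro B
    rw [tnorm_eq_sqrt, tnorm_eq_sqrt]
    congr 1
    have e1 : ∑ i, ∑ a, ∑ b, ‖tprodM M Q B i a b‖ ^ 2
        = (‖c‖ ^ 2)⁻¹ * ∑ i, ∑ a, ∑ b, ‖(mode3 Q M i * mode3 B M i) a b‖ ^ 2 := by
      unfold tprodM
      exact tsumsq_mode3 _ _ _ hMiHMi
    have e2 : ∀ i : Fin n, ∑ a, ∑ b, ‖(mode3 Q M i * mode3 B M i) a b‖ ^ 2
        = ∑ a, ∑ b, ‖mode3 B M i a b‖ ^ 2 := fun i =>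
      sumsq_mul_left (mode3 Q M i) (hQ1 i) (mode3 B M i)
    have e3 : ∑ i, ∑ a, ∑ b, ‖mode3 B M i a b‖ ^ 2
        = ‖c‖ ^ 2 * ∑ i, ∑ a, ∑ b, ‖B i a b‖ ^ 2 := tsumsq_mode3 _ _ _ hMHM
    rw [e1, Finset.sum_congr rfl fun i _ => e2 i, e3, ← mul_assoc,
      inv_mul_cancel₀ (ne_of_gt hcsq), one_mul]
  · intro B'
    rw [tnorm_eq_sqrt, tnorm_eq_sqrt]
    congr 1
    have e1 : ∑ i, ∑ a, ∑ b, ‖tprodM M B' Q i a b‖ ^ 2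
        = (‖c‖ ^ 2)⁻¹ * ∑ i, ∑ a, ∑ b, ‖(mode3 B' M i * mode3 Q M i) a b‖ ^ 2 := by
      unfold tprodM
      exact tsumsq_mode3 _ _ _ hMiHMi
    have e2 : ∀ i : Fin n, ∑ a, ∑ b, ‖(mode3 B' M i * mode3 Q M i) a b‖ ^ 2
        = ∑ a, ∑ b, ‖mode3 B' M i a b‖ ^ 2 := by
      intro i
      have := sumsq_mul_right (mode3 Q M i) (hQ2 i) (mode3 B' M i)
      exact this
    have e3 : ∑ i, ∑ a, ∑ b, ‖mode3 B' M i a b‖ ^ 2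
        = ‖c‖ ^ 2 * ∑ i, ∑ a, ∑ b, ‖B' i a b‖ ^ 2 := tsumsq_mode3 _ _ _ hMHM
    rw [e1, Finset.sum_congr rfl fun i _ => e2 i, e3, ← mul_assoc,
      inv_mul_cancel₀ (ne_of_gt hcsq), one_mul]
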